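/- Let D ∈ ℝ^{n×n} be symmetric and C ∈ ℝ^{n×m} have orthonormal columns. Then there exist m eigenvalues α_1, ..., α_m of D such that for every i ∈ [m], |α_i - λ_i(CᵀDC)| ≤ ‖DC - C·CᵀDC‖₂, where λ_i(CᵀDC) denote the eigenvalues of the m×m symmetric matrix CᵀDC. -/

import Mathlib

open Matrix Finset Submodule
open scoped Matrix.Norms.L2Operator InnerProductSpace

/-- The spectral (ℓ2 operator) norm of a real matrix. -/
noncomputable def specNorm {n m : ℕ} (A : Matrix (Fin n) (Fin m) ℝ) : ℝ :=
  ‖LinearMap.toContinuousLinearMap (Matrix.toEuclideanLin A)‖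

variable {n m : ℕ}

section herm
variable {A : Matrix (Fin n) (Fin n) ℝ} (hA : A.IsHermitian)

lemma emv_eigenvectorBasis (j : Fin n) :
    Matrix.toEuclideanLin A (hA.eigenvectorBasis j) = hA.eigenvalues j • hA.eigenvectorBasis j := by
  apply (WithLp.equiv 2 (Fin n → ℝ)).injective
  simpa [Matrix.toEuclideanLin_apply] using hA.mulVec_eigenvectorBasis j

lemma repr_emv (x : EuclideanSpace ℝ (Fin n)) (j : Fin n) :
    hA.eigenvectorBasis.repr (Matrix.toEuclideanLin A x) j
      = hA.eigenvalues j * hA.eigenvectorBasis.repr x j := by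
  set b := hA.eigenvectorBasis
  have hsym := (Matrix.isHermitian_iff_isSymmetric.1 hA)
  rw [b.repr_apply_apply, b.repr_apply_apply, ← hsym (b j) x, emv_eigenvectorBasis hA,
    inner_smul_left]
  simp [b]

lemma inner_self_emv (x : EuclideanSpace ℝ (Fin n)) :
    ⟪x, Matrix.toEuclideanLin A x⟫_ℝ
      = ∑ j, hA.eigenvalues j * (hA.eigenvectorBasis.repr x j)^2 := by
  set b := hA.eigenvectorBasis
  rw [← b.repr.inner_map_map x (Matrix.toEuclideanLin A x)]
  rw [EuclideanSpace.inner_eq_star_dotProduct]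
  simp [dotProduct, repr_emv hA]
  exact Finset.sum_congr rfl fun j _ => by simp only [b, repr_emv hA]; ring

lemma normsq_repr (x : EuclideanSpace ℝ (Fin n)) :
    ‖x‖^2 = ∑ j, (hA.eigenvectorBasis.repr x j)^2 := by
  set b := hA.eigenvectorBasis
  rw [← b.repr.norm_map x, EuclideanSpace.norm_eq]
  rw [Real.sq_sqrt (by positivity)]
  simp [sq_abs]
end herm

lemma mem_span_orthonormalBasis_iff (b : OrthonormalBasis (Fin n) ℝ (EuclideanSpace ℝ (Fin n)))
    (s : Finset (Fin n)) (x : EuclideanSpace ℝ (Fin n)) :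
    x ∈ Submodule.span ℝ (b '' s) ↔ ∀ j ∉ s, b.repr x j = 0 := by
  constructor
  · intro hx j hj
    induction hx using Submodule.span_induction with
    | mem y hy =>
      obtain ⟨i, hi, rfl⟩ := hy
      simp [b.repr_self, EuclideanSpace.single_apply]
      intro h; exact absurd (h ▸ hi) hj
    | zero => simp
    | add y z _ _ hy hz => simp [map_add, hy, hz]
    | smul c y _ hy => simp [_root_.map_smul, hy]
  · intro h
    have := b.sum_repr x
    rw [← this]
    apply Submodule.sum_mem
    intro j _
    by_cases hj : j ∈ s
    · exact Submodule.smul_mem _ _ (Submodule.subset_span ⟨j, hj, rfl⟩)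
    · simp [h j hj]

lemma finrank_span_orthonormal {k : ℕ} {v : Fin k → EuclideanSpace ℝ (Fin n)}
    (hv : Orthonormal ℝ v) (s : Finset (Fin k)) :
    Module.finrank ℝ (Submodule.span ℝ (v '' s)) = s.card := by
  have hli : LinearIndependent ℝ (fun i : s => v i) := (hv.linearIndependent).comp _ Subtype.val_injective
  have : (v '' s) = Set.range (fun i : s => v i) := by
    ext y; simp [Set.mem_image, Set.mem_range]
  rw [this, finrank_span_eq_card hli]
  simp

section cnt
variable {A : Matrix (Fin n) (Fin n) ℝ} (hA : A.IsHermitian)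

lemma aux_finrank_le (V W : Submodule ℝ (EuclideanSpace ℝ (Fin n))) (h : V ⊓ W = ⊥)
    {s : Finset (Fin n)} (hW : Module.finrank ℝ W = s.card) {c : ℕ} (hc : c + s.card = n) :
    Module.finrank ℝ V ≤ c := by
  have h1 := Submodule.finrank_sup_add_finrank_inf_eq V W
  have h2 : Module.finrank ℝ ↥(V ⊔ W) ≤ Module.finrank ℝ (EuclideanSpace ℝ (Fin n)) :=
    Submodule.finrank_le _
  rw [finrank_euclideanSpace_fin] at h2
  rw [h, hW] at h1
  simp at h1
  omega

lemma count_card (p : Fin n → Prop) [DecidablePred p] :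
    (univ.filter p).card + (univ.filter (fun j => ¬ p j)).card = n := by
  rw [Finset.card_filter_add_card_filter_not]; simp

lemma finrank_le_count_of_quadratic_ge (t : ℝ) (V : Submodule ℝ (EuclideanSpace ℝ (Fin n)))
    (hV : ∀ x ∈ V, t * ‖x‖^2 ≤ ⟪x, Matrix.toEuclideanLin A x⟫_ℝ) :
    Module.finrank ℝ V ≤ (univ.filter (fun j => t ≤ hA.eigenvalues j)).card := by
  classical
  set b := hA.eigenvectorBasis with hb
  set s : Finset (Fin n) := univ.filter (fun j => ¬ t ≤ hA.eigenvalues j) with hs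
  refine aux_finrank_le V (Submodule.span ℝ (b '' s)) ?_
    (finrank_span_orthonormal b.orthonormal s) (count_card _)
  rw [eq_bot_iff]
  rintro x ⟨hxV, hxW⟩
  rw [Submodule.mem_bot]
  by_contra hx0
  have hc := (mem_span_orthonormalBasis_iff b s x).1 hxW
  have hsum : ∀ g : Fin n → ℝ, ∑ j ∈ s, g j * (b.repr x j)^2 = ∑ j, g j * (b.repr x j)^2 := by
    intro g
    refine Finset.sum_subset (Finset.subset_univ s) (fun j _ hj => ?_)
    rw [hc j hj]; ring
  obtain ⟨j0, hj0⟩ : ∃ j, b.repr x j ≠ 0 := by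
    by_contra h
    push_neg at h
    exact hx0 (b.repr.map_eq_zero_iff.1 (by ext j; simpa using h j))
  have hj0s : j0 ∈ s := by
    by_contra h; exact hj0 (hc j0 h)
  have hlt : ∑ j ∈ s, hA.eigenvalues j * (b.repr x j)^2 < ∑ j ∈ s, t * (b.repr x j)^2 := by
    refine Finset.sum_lt_sum (fun j hj => ?_) ⟨j0, hj0s, ?_⟩
    · have : hA.eigenvalues j < t := by
        have := Finset.mem_filter.1 hj; push_neg at this; exact this.2
      exact mul_le_mul_of_nonneg_right this.le (sq_nonneg _)
    · have h1 : hA.eigenvalues j0 < t := by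
        have := Finset.mem_filter.1 hj0s; push_neg at this; exact this.2
      exact (mul_lt_mul_of_pos_right h1 (by positivity))
  have e1 : ∑ j ∈ s, hA.eigenvalues j * (b.repr x j)^2
      = ⟪x, Matrix.toEuclideanLin A x⟫_ℝ := by
    rw [inner_self_emv hA]
    exact hsum _
  have e2 : ∑ j ∈ s, t * (b.repr x j)^2 = t * ‖x‖^2 := by
    rw [normsq_repr hA, Finset.mul_sum]
    exact hsum _
  rw [e1, e2] at hlt
  exact absurd (hV x hxV) (not_le.2 hlt)

lemma finrank_le_count_of_eigen (t : ℝ) (V : Submodule ℝ (EuclideanSpace ℝ (Fin n)))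
    (hV : ∀ x ∈ V, Matrix.toEuclideanLin A x = t • x) :
    Module.finrank ℝ V ≤ (univ.filter (fun j => hA.eigenvalues j = t)).card := by
  classical
  set b := hA.eigenvectorBasis with hb
  set s : Finset (Fin n) := univ.filter (fun j => ¬ hA.eigenvalues j = t) with hs
  refine aux_finrank_le V (Submodule.span ℝ (b '' s)) ?_
    (finrank_span_orthonormal b.orthonormal s) (count_card _)
  rw [eq_bot_iff]
  rintro x ⟨hxV, hxW⟩
  rw [Submodule.mem_bot]
  have hc := (mem_span_orthonormalBasis_iff b s x).1 hxW
  have hall : ∀ j, b.repr x j = 0 := by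
    intro j
    by_cases hj : j ∈ s
    · have h1 : hA.eigenvalues j * b.repr x j = t * b.repr x j := by
        rw [← repr_emv hA, hV x hxV, _root_.map_smul]
        simp [b]
      have h2 : hA.eigenvalues j ≠ t := by
        have := Finset.mem_filter.1 hj; exact this.2
      by_contra h0
      exact h2 (mul_right_cancel₀ h0 h1)
    · exact hc j hj
  exact b.repr.map_eq_zero_iff.1 (by ext j; simpa using hall j)

end cnt

lemma norm_toEuclideanLin_le (M : Matrix (Fin n) (Fin m) ℝ) (x : EuclideanSpace ℝ (Fin m)) :
    ‖Matrix.toEuclideanLin M x‖ ≤ ‖M‖ * ‖x‖ := M.l2_opNorm_mulVec x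

lemma abs_inner_toEuclideanLin_le (M : Matrix (Fin n) (Fin n) ℝ) (x : EuclideanSpace ℝ (Fin n)) :
    |⟪x, Matrix.toEuclideanLin M x⟫_ℝ| ≤ ‖M‖ * ‖x‖^2 := by
  calc |⟪x, Matrix.toEuclideanLin M x⟫_ℝ| ≤ ‖x‖ * ‖Matrix.toEuclideanLin M x‖ :=
        abs_real_inner_le_norm _ _
    _ ≤ ‖x‖ * (‖M‖ * ‖x‖) := by
        exact mul_le_mul_of_nonneg_left (norm_toEuclideanLin_le M x) (norm_nonneg _)
    _ = ‖M‖ * ‖x‖^2 := by ring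

lemma quadratic_ge_on_span {A : Matrix (Fin n) (Fin n) ℝ} (hA : A.IsHermitian) (t : ℝ)
    (s : Finset (Fin n)) (hst : ∀ j ∈ s, t ≤ hA.eigenvalues j) :
    ∀ x ∈ Submodule.span ℝ (hA.eigenvectorBasis '' s), t * ‖x‖^2 ≤ ⟪x, Matrix.toEuclideanLin A x⟫_ℝ := by
  classical
  intro x hx
  set b := hA.eigenvectorBasis
  have hc := (mem_span_orthonormalBasis_iff b s x).1 hx
  have hsum : ∀ g : Fin n → ℝ, ∑ j ∈ s, g j * (b.repr x j)^2 = ∑ j, g j * (b.repr x j)^2 := by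
    intro g
    refine Finset.sum_subset (Finset.subset_univ s) (fun j _ hj => ?_)
    rw [hc j hj]; ring
  rw [inner_self_emv hA, ← hsum, normsq_repr hA, Finset.mul_sum, ← hsum (fun _ => t)]
  exact Finset.sum_le_sum (fun j hj => mul_le_mul_of_nonneg_right (hst j hj) (sq_nonneg _))

/-- Weyl-type counting inequality. -/
lemma weyl_count {D A : Matrix (Fin n) (Fin n) ℝ} (hD : D.IsHermitian) (hA : A.IsHermitian)
    (r t : ℝ) (hr : ‖D - A‖ ≤ r) :
    (univ.filter (fun j => t ≤ hA.eigenvalues j)).card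
      ≤ (univ.filter (fun j => t - r ≤ hD.eigenvalues j)).card := by
  classical
  set s : Finset (Fin n) := univ.filter (fun j => t ≤ hA.eigenvalues j) with hs
  set V := Submodule.span ℝ (hA.eigenvectorBasis '' s) with hV
  have hq : ∀ x ∈ V, (t - r) * ‖x‖^2 ≤ ⟪x, Matrix.toEuclideanLin D x⟫_ℝ := by
    intro x hx
    have h1 := quadratic_ge_on_span hA t s (fun j hj => (Finset.mem_filter.1 hj).2) x hx
    have h2 : ⟪x, Matrix.toEuclideanLin D x⟫_ℝ
        = ⟪x, Matrix.toEuclideanLin A x⟫_ℝ + ⟪x, Matrix.toEuclideanLin (D - A) x⟫_ℝ := by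
      rw [map_sub]
      simp only [LinearMap.sub_apply, inner_sub_right]
      ring
    have h3 : -(r * ‖x‖^2) ≤ ⟪x, Matrix.toEuclideanLin (D - A) x⟫_ℝ := by
      have := abs_inner_toEuclideanLin_le (D - A) x
      have h4 : ‖D - A‖ * ‖x‖^2 ≤ r * ‖x‖^2 :=
        mul_le_mul_of_nonneg_right hr (sq_nonneg _)
      have := (abs_le.1 this).1
      nlinarith
    nlinarith
  have := finrank_le_count_of_quadratic_ge hD (t - r) V hq
  rwa [hV, finrank_span_orthonormal hA.eigenvectorBasis.orthonormal s] at this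

/-- Multiplicity counting: orthonormal eigenvectors force eigenvalue multiplicities. -/
lemma mult_count {A : Matrix (Fin n) (Fin n) ℝ} (hA : A.IsHermitian) {k : ℕ}
    (x : Fin k → EuclideanSpace ℝ (Fin n)) (hx : Orthonormal ℝ x) (μ : Fin k → ℝ)
    (heig : ∀ i, Matrix.toEuclideanLin A (x i) = μ i • x i) (c : ℝ) :
    (univ.filter (fun i => μ i = c)).card ≤ (univ.filter (fun j => hA.eigenvalues j = c)).card := by
  classical
  set s : Finset (Fin k) := univ.filter (fun i => μ i = c) with hs
  set V := Submodule.span ℝ (x '' s) with hV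
  have hq : ∀ y ∈ V, Matrix.toEuclideanLin A y = c • y := by
    intro y hy
    induction hy using Submodule.span_induction with
    | mem z hz =>
      obtain ⟨i, hi, rfl⟩ := hz
      rw [heig i, (Finset.mem_filter.1 hi).2]
    | zero => simp
    | add y z _ _ hy hz => rw [map_add, hy, hz, smul_add]
    | smul a y _ hy => rw [_root_.map_smul, hy, smul_comm]
  have := finrank_le_count_of_eigen hA c V hq
  rwa [hV, finrank_span_orthonormal hx s] at this

/-- Matching injection from pointwise value-count domination. -/
lemma exists_matching {α β : Type*} [DecidableEq α] [DecidableEq β] [Nonempty β]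
    (f : α → ℝ) (g : β → ℝ) (s : Finset α) :
    ∀ t : Finset β, (∀ c, (s.filter (fun a => f a = c)).card ≤ (t.filter (fun b => g b = c)).card) →
    ∃ e : α → β, Set.InjOn e ↑s ∧ ∀ a ∈ s, e a ∈ t ∧ g (e a) = f a := by
  classical
  induction s using Finset.induction_on with
  | empty => intro t _; exact ⟨fun _ => Classical.arbitrary β, by simp, by simp⟩
  | @insert a s ha ih =>
    intro t hcount
    have h1 : 1 ≤ (t.filter (fun b => g b = f a)).card := by
      refine le_trans ?_ (hcount (f a))
      rw [Nat.one_le_iff_ne_zero, ← Nat.pos_iff_ne_zero, Finset.card_pos]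
      exact ⟨a, Finset.mem_filter.2 ⟨Finset.mem_insert_self a s, rfl⟩⟩
    obtain ⟨b0, hb0⟩ := Finset.card_pos.1 (lt_of_lt_of_le one_pos h1)
    obtain ⟨hb0t, hb0g⟩ := Finset.mem_filter.1 hb0
    obtain ⟨e, he1, he2⟩ := ih (t.erase b0) (fun c => by
      by_cases hc : c = f a
      · subst hc
        have h2 : ((insert a s).filter (fun x => f x = f a)).card
            = (s.filter (fun x => f x = f a)).card + 1 := by
          rw [Finset.filter_insert, if_pos rfl, Finset.card_insert_of_notMem
            (fun h => ha (Finset.mem_of_mem_filter a h))]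
        have h3 : ((t.erase b0).filter (fun b => g b = f a)).card
            = (t.filter (fun b => g b = f a)).card - 1 := by
          rw [Finset.filter_erase, Finset.card_erase_of_mem hb0]
        have := hcount (f a)
        omega
      · have h3 : ((t.erase b0).filter (fun b => g b = c)).card
            = (t.filter (fun b => g b = c)).card := by
          rw [Finset.filter_erase]
          rw [Finset.erase_eq_of_notMem]
          intro hmem
          exact hc ((Finset.mem_filter.1 hmem).2 ▸ hb0g ▸ rfl)
        rw [h3]
        refine le_trans (Finset.card_le_card ?_) (hcount c)
        exact Finset.filter_subset_filter _ (Finset.subset_insert a s)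
      )
    refine ⟨Function.update e a b0, ?_, ?_⟩
    · intro x hx y hy hxy
      simp only [Finset.coe_insert, Set.mem_insert_iff] at hx hy
      by_cases hxa : x = a <;> by_cases hya : y = a
      · rw [hxa, hya]
      · have hy' : y ∈ s := hy.resolve_left hya
        rw [hxa, Function.update_self, Function.update_of_ne hya] at hxy
        exact absurd (hxy ▸ (he2 y hy').1) (Finset.notMem_erase b0 t)
      · have hx' : x ∈ s := hx.resolve_left hxa
        rw [hya, Function.update_self, Function.update_of_ne hxa] at hxy
        exact absurd (hxy.symm ▸ (he2 x hx').1) (Finset.notMem_erase b0 t)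
      · rw [Function.update_of_ne hxa, Function.update_of_ne hya] at hxy
        exact he1 (hx.resolve_left hxa) (hy.resolve_left hya) hxy
    · intro x hx
      by_cases hxa : x = a
      · rw [hxa, Function.update_self]; exact ⟨hb0t, hb0g⟩
      · have hx' : x ∈ s := (Finset.mem_insert.1 hx).resolve_left hxa
        rw [Function.update_of_ne hxa]
        exact ⟨Finset.mem_of_mem_erase (he2 x hx').1, (he2 x hx').2⟩

lemma count_comp_perm (σ : Equiv.Perm (Fin n)) (p : ℝ → Prop) [DecidablePred p] (a : Fin n → ℝ) :
    (univ.filter (fun j => p (a (σ j)))).card = (univ.filter (fun j => p (a j))).card := by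
  apply Finset.card_bij (fun j _ => σ j)
  · intro j hj; simp only [Finset.mem_filter] at hj ⊢; exact ⟨Finset.mem_univ _, hj.2⟩
  · intro j _ j' _ h; exact σ.injective h
  · intro b hb
    refine ⟨σ.symm b, ?_, by simp⟩
    simp only [Finset.mem_filter] at hb ⊢
    simpa using hb.2

lemma sorted_close (a b : Fin n → ℝ) (ha : Monotone a) (hb : Monotone b) (r : ℝ)
    (h : ∀ t : ℝ, (univ.filter (fun j => t ≤ a j)).card
      ≤ (univ.filter (fun j => t - r ≤ b j)).card) :
    ∀ k, a k - r ≤ b k := by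
  intro k
  by_contra hk
  push_neg at hk
  have hlow : n - (k : ℕ) ≤ (univ.filter (fun j => a k ≤ a j)).card := by
    have hsub : Finset.Ici k ⊆ univ.filter (fun j => a k ≤ a j) := by
      intro j hj
      exact Finset.mem_filter.2 ⟨Finset.mem_univ _, ha (Finset.mem_Ici.1 hj)⟩
    simpa [Fin.card_Ici] using Finset.card_le_card hsub
  have hup : (univ.filter (fun j => a k - r ≤ b j)).card ≤ n - ((k : ℕ) + 1) := by
    have hsub : univ.filter (fun j => a k - r ≤ b j) ⊆ univ \ Finset.Iic k := by
      intro j hj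
      rw [Finset.mem_sdiff]
      refine ⟨Finset.mem_univ _, fun hjk => ?_⟩
      have : b j ≤ b k := hb (Finset.mem_Iic.1 hjk)
      have := (Finset.mem_filter.1 hj).2
      linarith
    refine le_trans (Finset.card_le_card hsub) ?_
    rw [Finset.card_sdiff_of_subset (Finset.subset_univ _)]
    simp [Fin.card_Iic]
  have := le_trans hlow (le_trans (h (a k)) hup)
  have := k.is_lt
  omega

lemma pairing (lam ν : Fin n → ℝ) (r : ℝ)
    (h1 : ∀ t : ℝ, (univ.filter (fun j => t ≤ ν j)).card
      ≤ (univ.filter (fun j => t - r ≤ lam j)).card)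
    (h2 : ∀ t : ℝ, (univ.filter (fun j => t ≤ lam j)).card
      ≤ (univ.filter (fun j => t - r ≤ ν j)).card) :
    ∃ g : Fin n → Fin n, Function.Injective g ∧ ∀ j, |lam (g j) - ν j| ≤ r := by
  classical
  set σ := Tuple.sort ν
  set τ := Tuple.sort lam
  have hmν : Monotone (ν ∘ σ) := Tuple.monotone_sort ν
  have hml : Monotone (lam ∘ τ) := Tuple.monotone_sort lam
  have key1 : ∀ k, (ν ∘ σ) k - r ≤ (lam ∘ τ) k := by
    refine sorted_close _ _ hmν hml r (fun t => ?_)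
    rw [show (univ.filter (fun j => t ≤ (ν ∘ σ) j)) = univ.filter (fun j => t ≤ ν (σ j)) from rfl,
      count_comp_perm σ (fun y => t ≤ y) ν,
      show (univ.filter (fun j => t - r ≤ (lam ∘ τ) j)) = univ.filter (fun j => t - r ≤ lam (τ j)) from rfl,
      count_comp_perm τ (fun y => t - r ≤ y) lam]
    exact h1 t
  have key2 : ∀ k, (lam ∘ τ) k - r ≤ (ν ∘ σ) k := by
    refine sorted_close _ _ hml hmν r (fun t => ?_)
    rw [show (univ.filter (fun j => t ≤ (lam ∘ τ) j)) = univ.filter (fun j => t ≤ lam (τ j)) from rfl,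
      count_comp_perm τ (fun y => t ≤ y) lam,
      show (univ.filter (fun j => t - r ≤ (ν ∘ σ) j)) = univ.filter (fun j => t - r ≤ ν (σ j)) from rfl,
      count_comp_perm σ (fun y => t - r ≤ y) ν]
    exact h2 t
  refine ⟨fun j => τ (σ.symm j), fun x y hxy => ?_, fun j => ?_⟩
  · exact σ.symm.injective (τ.injective hxy)
  · have e1 := key1 (σ.symm j)
    have e2 := key2 (σ.symm j)
    have : ν (σ (σ.symm j)) = ν j := by rw [Equiv.apply_symm_apply]
    simp only [Function.comp_apply, this] at e1 e2
    rw [abs_le]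
    constructor <;> linarith

lemma normsq_eq_dot {k : ℕ} (x : EuclideanSpace ℝ (Fin k)) :
    ‖x‖^2 = (x : Fin k → ℝ) ⬝ᵥ (x : Fin k → ℝ) := by
  rw [← real_inner_self_eq_norm_sq, EuclideanSpace.inner_eq_star_dotProduct]
  simp [dotProduct, mul_comm]

lemma inner_eq_dot {k : ℕ} (x y : EuclideanSpace ℝ (Fin k)) :
    ⟪x, y⟫_ℝ = (x : Fin k → ℝ) ⬝ᵥ (y : Fin k → ℝ) := by
  rw [EuclideanSpace.inner_eq_star_dotProduct]
  simp [dotProduct, mul_comm]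

lemma coe_toEuclideanLin {a b : ℕ} (M : Matrix (Fin a) (Fin b) ℝ) (x : EuclideanSpace ℝ (Fin b)) :
    (Matrix.toEuclideanLin M x : Fin a → ℝ) = M *ᵥ (x : Fin b → ℝ) := rfl

lemma toEuclideanLin_comp {a b c : ℕ} (M : Matrix (Fin a) (Fin b) ℝ)
    (N : Matrix (Fin b) (Fin c) ℝ) (x : EuclideanSpace ℝ (Fin c)) :
    Matrix.toEuclideanLin (M * N) x = Matrix.toEuclideanLin M (Matrix.toEuclideanLin N x) := by
  apply (WithLp.equiv 2 (Fin a → ℝ)).injective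
  simp [coe_toEuclideanLin, Matrix.mulVec_mulVec]

set_option maxHeartbeats 1600000 in
lemma norm_residual_bound {n m : ℕ} (D : Matrix (Fin n) (Fin n) ℝ) (hD : D.IsHermitian)
    (C : Matrix (Fin n) (Fin m) ℝ) (hC : Cᵀ * C = 1) (hS : (Cᵀ * D * C).IsHermitian) :
    ‖D - (C * (Cᵀ * D * C) * Cᵀ + (1 - C * Cᵀ) * D * (1 - C * Cᵀ))‖
      ≤ ‖D * C - C * (Cᵀ * D * C)‖ := by
  have hDt : Dᵀ = D := by
    rw [← Matrix.conjTranspose_eq_transpose_of_trivial]; exact hD.eq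
  have hSt : (Cᵀ * D * C)ᵀ = Cᵀ * D * C := by
    rw [← Matrix.conjTranspose_eq_transpose_of_trivial]; exact hS.eq
  set S := Cᵀ * D * C with hSdef
  set R := D * C - C * S with hRdef
  have hRt : Rᵀ = Cᵀ * D - S * Cᵀ := by
    rw [hRdef, Matrix.transpose_sub, Matrix.transpose_mul, Matrix.transpose_mul, hDt, hSt]
  have hCR : Cᵀ * R = 0 := by
    rw [hRdef, Matrix.mul_sub, ← Matrix.mul_assoc Cᵀ C S, hC, Matrix.one_mul, hSdef,
      Matrix.mul_assoc]
    exact sub_self _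
  have hRtC : Rᵀ * C = 0 := by
    rw [hRt, Matrix.sub_mul, Matrix.mul_assoc S Cᵀ C, hC, Matrix.mul_one, hSdef]
    exact sub_self _
  have hid : D - (C * S * Cᵀ + (1 - C * Cᵀ) * D * (1 - C * Cᵀ)) = R * Cᵀ + C * Rᵀ := by
    rw [hRt, hRdef, hSdef]
    simp only [Matrix.sub_mul, Matrix.mul_sub, Matrix.add_mul, Matrix.mul_add,
      Matrix.mul_one, Matrix.one_mul, Matrix.mul_assoc]
    abel
  have hRtP : Rᵀ * (1 - C * Cᵀ) = Rᵀ := by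
    rw [Matrix.mul_sub, Matrix.mul_one, ← Matrix.mul_assoc, hRtC, Matrix.zero_mul, sub_zero]
  have hPPt : (1 - C * Cᵀ)ᵀ * (1 - C * Cᵀ) = 1 - C * Cᵀ := by
    have ht : (1 - C * Cᵀ)ᵀ = 1 - C * Cᵀ := by
      rw [Matrix.transpose_sub, Matrix.transpose_one, Matrix.transpose_mul,
        Matrix.transpose_transpose]
    rw [ht, Matrix.sub_mul, Matrix.one_mul, Matrix.mul_sub, Matrix.mul_one,
      show C * Cᵀ * (C * Cᵀ) = C * Cᵀ by
        rw [Matrix.mul_assoc, ← Matrix.mul_assoc Cᵀ C Cᵀ, hC, Matrix.one_mul]]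
    abel
  -- operator norm bound via vectors
  rw [hid, Matrix.l2_opNorm_def]
  refine ContinuousLinearMap.opNorm_le_bound _ (norm_nonneg _) (fun x => ?_)
  show ‖Matrix.toEuclideanLin (R * Cᵀ + C * Rᵀ) x‖ ≤ ‖R‖ * ‖x‖
  have hfx : Matrix.toEuclideanLin (R * Cᵀ + C * Rᵀ) x
      = Matrix.toEuclideanLin (R * Cᵀ) x + Matrix.toEuclideanLin (C * Rᵀ) x := by
    rw [map_add]; simp [LinearMap.add_apply]
  rw [hfx]
  set u := Matrix.toEuclideanLin Cᵀ x with hu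
  set w := Matrix.toEuclideanLin Rᵀ x with hw
  set z := Matrix.toEuclideanLin (1 - C * Cᵀ) x with hz
  have ha : Matrix.toEuclideanLin (R * Cᵀ) x = Matrix.toEuclideanLin R u := by
    rw [toEuclideanLin_comp]
  have hb : Matrix.toEuclideanLin (C * Rᵀ) x = Matrix.toEuclideanLin C w := by
    rw [toEuclideanLin_comp]
  rw [ha, hb]
  set av := Matrix.toEuclideanLin R u with hav
  set bv := Matrix.toEuclideanLin C w with hbv
  have horth : ⟪av, bv⟫_ℝ = 0 := by
    rw [inner_eq_dot, hbv, coe_toEuclideanLin C w, Matrix.dotProduct_mulVec,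
      ← Matrix.mulVec_transpose, hav, coe_toEuclideanLin R u, Matrix.mulVec_mulVec, hCR]
    simp
  have hbn : ‖bv‖^2 = ‖w‖^2 := by
    rw [normsq_eq_dot, normsq_eq_dot, hbv, coe_toEuclideanLin, Matrix.dotProduct_mulVec,
      ← Matrix.mulVec_transpose, Matrix.mulVec_mulVec, hC]
    simp
  have hwz : w = Matrix.toEuclideanLin Rᵀ z := by
    rw [hz, ← toEuclideanLin_comp, hRtP]
  have hwn : ‖w‖ ≤ ‖R‖ * ‖z‖ := by
    rw [hwz]
    calc ‖Matrix.toEuclideanLin Rᵀ z‖ ≤ ‖Rᵀ‖ * ‖z‖ := norm_toEuclideanLin_le Rᵀ z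
      _ = ‖R‖ * ‖z‖ := by
          rw [show Rᵀ = Rᴴ from (Matrix.conjTranspose_eq_transpose_of_trivial R).symm,
            Matrix.l2_opNorm_conjTranspose]
  have han : ‖av‖ ≤ ‖R‖ * ‖u‖ := norm_toEuclideanLin_le R u
  have hx2 : ‖u‖^2 + ‖z‖^2 = ‖x‖^2 := by
    rw [normsq_eq_dot, normsq_eq_dot, normsq_eq_dot, hu, hz, coe_toEuclideanLin,
      coe_toEuclideanLin, Matrix.dotProduct_mulVec, ← Matrix.mulVec_transpose,
      Matrix.mulVec_mulVec, Matrix.transpose_transpose,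
      Matrix.dotProduct_mulVec (((1 - C * Cᵀ) *ᵥ x)), ← Matrix.mulVec_transpose,
      Matrix.mulVec_mulVec, hPPt, ← add_dotProduct, ← Matrix.add_mulVec]
    rw [show C * Cᵀ + (1 - C * Cᵀ) = 1 by abel]
    simp
  have hsum : ‖av + bv‖^2 = ‖av‖^2 + ‖bv‖^2 := by
    rw [@norm_add_sq_real]
    rw [horth]; ring
  have hfinal : ‖av + bv‖^2 ≤ (‖R‖ * ‖x‖)^2 := by
    rw [hsum, hbn]
    have h1 : ‖av‖^2 ≤ ‖R‖^2 * ‖u‖^2 := by nlinarith [norm_nonneg av, norm_nonneg u, norm_nonneg R]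
    have h2 : ‖w‖^2 ≤ ‖R‖^2 * ‖z‖^2 := by nlinarith [norm_nonneg w, norm_nonneg z, norm_nonneg R]
    nlinarith [hx2]
  nlinarith [norm_nonneg (av + bv), mul_nonneg (norm_nonneg R) (norm_nonneg x)]

set_option maxHeartbeats 1600000 in
/-- Kahan residual bound, Parlett Thm 11.5.1: Let `D ∈ ℝ^{n×n}` be symmetric
and `C ∈ ℝ^{n×m}` have orthonormal columns. Then there are `m` eigenvalues of `D` (an
injective selection) such that each is within `‖DC - C·CᵀDC‖₂` of the corresponding
eigenvalue of `CᵀDC`. -/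
theorem stmt_4 {n m : ℕ} (D : Matrix (Fin n) (Fin n) ℝ) (hD : D.IsHermitian)
    (C : Matrix (Fin n) (Fin m) ℝ) (hC : Cᵀ * C = 1)
    (hS : (Cᵀ * D * C).IsHermitian) :
    ∃ f : Fin m → Fin n, Function.Injective f ∧
      ∀ i, |hD.eigenvalues (f i) - hS.eigenvalues i| ≤
        specNorm (D * C - C * (Cᵀ * D * C)) := by
  classical
  rcases Nat.eq_zero_or_pos m with hm | hm
  · subst hm
    exact ⟨Fin.elim0, fun a => a.elim0, fun i => i.elim0⟩
  have hDt : Dᵀ = D := by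
    rw [← Matrix.conjTranspose_eq_transpose_of_trivial]; exact hD.eq
  have hSt : (Cᵀ * D * C)ᵀ = Cᵀ * D * C := by
    rw [← Matrix.conjTranspose_eq_transpose_of_trivial]; exact hS.eq
  set A := C * (Cᵀ * D * C) * Cᵀ + (1 - C * Cᵀ) * D * (1 - C * Cᵀ) with hAdef
  have hA' : A.IsHermitian := by
    show Aᴴ = A
    rw [Matrix.conjTranspose_eq_transpose_of_trivial, hAdef]
    simp only [Matrix.transpose_add, Matrix.transpose_mul, Matrix.transpose_sub,
      Matrix.transpose_one, Matrix.transpose_transpose, hDt, hSt]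
    simp [Matrix.mul_assoc]
  set r := ‖D * C - C * (Cᵀ * D * C)‖ with hrdef
  have hrnorm : ‖D - A‖ ≤ r := norm_residual_bound D hD C hC hS
  have hPC : (1 - C * Cᵀ) * C = 0 := by
    rw [Matrix.sub_mul, Matrix.one_mul, Matrix.mul_assoc, hC, Matrix.mul_one]
    exact sub_self _
  have hAC : A * C = C * (Cᵀ * D * C) := by
    rw [hAdef, Matrix.add_mul, Matrix.mul_assoc (C * (Cᵀ * D * C)) Cᵀ C, hC, Matrix.mul_one,
      Matrix.mul_assoc ((1 - C * Cᵀ) * D) (1 - C * Cᵀ) C, hPC, Matrix.mul_zero, add_zero]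
  set v := hS.eigenvectorBasis with hv
  set μ := hS.eigenvalues with hμ
  set xs : Fin m → EuclideanSpace ℝ (Fin n) := fun i => Matrix.toEuclideanLin C (v i) with hxs
  have hxs_on : Orthonormal ℝ xs := by
    rw [orthonormal_iff_ite]
    intro i j
    have : ⟪xs i, xs j⟫_ℝ = ⟪v i, v j⟫_ℝ := by
      rw [inner_eq_dot, inner_eq_dot, hxs]
      simp only [coe_toEuclideanLin]
      rw [Matrix.dotProduct_mulVec, ← Matrix.mulVec_transpose, Matrix.mulVec_mulVec, hC]
      simp
    rw [this, ← orthonormal_iff_ite.1 v.orthonormal i j]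
  have hxs_eig : ∀ i, Matrix.toEuclideanLin A (xs i) = μ i • xs i := by
    intro i
    rw [hxs]
    show Matrix.toEuclideanLin A (Matrix.toEuclideanLin C (v i)) = _
    rw [← toEuclideanLin_comp, hAC, toEuclideanLin_comp, hv, emv_eigenvectorBasis hS,
      _root_.map_smul]
  have hcount : ∀ c, (univ.filter (fun i => μ i = c)).card
      ≤ (univ.filter (fun j => hA'.eigenvalues j = c)).card :=
    fun c => mult_count hA' xs hxs_on μ hxs_eig c
  have hw1 : ∀ t : ℝ, (univ.filter (fun j => t ≤ hA'.eigenvalues j)).card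
      ≤ (univ.filter (fun j => t - r ≤ hD.eigenvalues j)).card :=
    fun t => weyl_count hD hA' r t hrnorm
  have hw2 : ∀ t : ℝ, (univ.filter (fun j => t ≤ hD.eigenvalues j)).card
      ≤ (univ.filter (fun j => t - r ≤ hA'.eigenvalues j)).card :=
    fun t => weyl_count hA' hD r t (by rwa [norm_sub_rev])
  obtain ⟨g, hg, hgb⟩ := pairing hD.eigenvalues hA'.eigenvalues r hw1 hw2
  have hn : Nonempty (Fin n) := by
    have h1 := hcount (μ ⟨0, hm⟩)
    have h2 : 0 < (univ.filter (fun i => μ i = μ ⟨0, hm⟩)).card :=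
      Finset.card_pos.2 ⟨⟨0, hm⟩, Finset.mem_filter.2 ⟨Finset.mem_univ _, rfl⟩⟩
    have h3 := Finset.card_pos.1 (lt_of_lt_of_le h2 h1)
    exact ⟨h3.choose⟩
  obtain ⟨e, he1, he2⟩ := exists_matching μ hA'.eigenvalues univ univ (fun c => hcount c)
  refine ⟨g ∘ e, ?_, ?_⟩
  · have he : Function.Injective e := by
      have : Set.InjOn e Set.univ := by simpa using he1
      exact fun a b hab => this (Set.mem_univ a) (Set.mem_univ b) hab
    exact hg.comp he
  · intro i
    have h1 := hgb (e i)
    have h2 := (he2 i (Finset.mem_univ i)).2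
    show |hD.eigenvalues (g (e i)) - μ i| ≤ r
    rw [← h2]
    exact h1
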